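/- arXiv:1106.5189 — 6 statements merged into one kernel-verified Lean document; each statement's English description precedes it below -/
import Mathlib

section
/- With 𝔤 a nonassociative algebra over a field of characteristic zero and K the K-operator on T(𝔤), the map K is a bijection of T(𝔤). -/
/-- The K-operator of a nonassociative algebra `𝔤` over a field of characteristic zero is a
bijection of `T(𝔤)`.  Here `d` is the bilinear multiplication `⋄` of `𝔤`, `τ x` is the
derivation of `T(𝔤)` extending `y ↦ x ⋄ y`, and `K` is the (unique) linear map with
`K(1) = 1` and `K(x ⊗ a + τ_x a) = x ⊗ K(a)`. -/
theorem kOperator_bijective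
    (k : Type*) [Field k] [CharZero k] (g : Type*) [AddCommGroup g] [Module k g]
    (d : g →ₗ[k] g →ₗ[k] g)
    (τ : g → TensorAlgebra k g →ₗ[k] TensorAlgebra k g)
    (hτder : ∀ (x : g) (a b : TensorAlgebra k g), τ x (a * b) = τ x a * b + a * τ x b)
    (hτι : ∀ x y : g, τ x (TensorAlgebra.ι k y) = TensorAlgebra.ι k (d x y))
    (K : TensorAlgebra k g →ₗ[k] TensorAlgebra k g)
    (hK1 : K 1 = 1)
    (hK : ∀ (x : g) (a : TensorAlgebra k g),
      K (TensorAlgebra.ι k x * a + τ x a) = TensorAlgebra.ι k x * K a) :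
    Function.Bijective K := by
  set T := TensorAlgebra k g
  set R : Submodule k T := LinearMap.range (TensorAlgebra.ι k (M := g)) with hR
  set F : ℕ → Submodule k T := fun n => (R ⊔ 1) ^ n with hF
  -- basic facts
  have hτ1 : ∀ x, τ x (1 : T) = 0 := by
    intro x
    have := hτder x 1 1
    simp only [mul_one, one_mul] at this
    have h2 : τ x (1 : T) + τ x 1 = τ x 1 + 0 := by rw [add_zero]; exact this.symm
    exact (add_left_cancel h2)
  have hF0 : ∀ a ∈ F 0, ∃ c : k, a = c • (1 : T) := by
    intro a ha
    simp only [hF, pow_zero, Submodule.one_eq_span, Submodule.mem_span_singleton] at ha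
    obtain ⟨c, hc⟩ := ha
    exact ⟨c, hc.symm⟩
  have hK0 : ∀ a ∈ F 0, K a = a := by
    intro a ha
    obtain ⟨c, rfl⟩ := hF0 a ha
    rw [map_smul, hK1]
  have hτ0 : ∀ x, ∀ a ∈ F 0, τ x a = 0 := by
    intro x a ha
    obtain ⟨c, rfl⟩ := hF0 a ha
    rw [map_smul, hτ1, smul_zero]
  have hsucc : ∀ n, F (n + 1) = R * F n ⊔ F n := by
    intro n
    show (R ⊔ 1) ^ (n + 1) = _
    rw [pow_succ', Submodule.sup_mul, Submodule.one_mul]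
  have hRF : ∀ n, R * F n ≤ F (n + 1) := fun n => (hsucc n) ▸ le_sup_left
  have hmono : Monotone F := by
    apply monotone_nat_of_le_succ
    intro n
    rw [hsucc n]
    exact le_sup_right
  -- τ preserves the filtration
  have hτF : ∀ x n, ∀ a ∈ F n, τ x a ∈ F n := by
    intro x n
    induction n with
    | zero => intro a ha; rw [hτ0 x a ha]; exact zero_mem _
    | succ n ih =>
      intro a ha
      rw [hsucc n] at ha
      obtain ⟨b, hb, c, hc, rfl⟩ := Submodule.mem_sup.mp ha
      rw [map_add]
      refine add_mem ?_ (hmono (Nat.le_succ n) (ih c hc))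
      refine Submodule.mul_induction_on hb ?_ ?_
      · rintro r ⟨y, rfl⟩ a ha
        rw [hτder, hτι]
        refine add_mem (hRF n ?_) (hRF n ?_)
        · exact Submodule.mul_mem_mul ⟨d x y, rfl⟩ ha
        · exact Submodule.mul_mem_mul ⟨y, rfl⟩ (ih a ha)
      · intro p q hp hq
        rw [map_add]; exact add_mem hp hq
  -- K(ι x * a) = ι x * K a - K (τ x a)
  have hKmul : ∀ (x : g) (a : T),
      K (TensorAlgebra.ι k x * a) = TensorAlgebra.ι k x * K a - K (τ x a) := by
    intro x a
    have := hK x a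
    rw [map_add] at this
    linear_combination (norm := module) this
  -- the key filtration lemma
  have key : ∀ n, ∀ a ∈ F (n + 1), K a ∈ F (n + 1) ∧ K a - a ∈ F n := by
    intro n
    induction n with
    | zero =>
      intro a ha
      rw [hsucc 0] at ha
      obtain ⟨b, hb, c, hc, rfl⟩ := Submodule.mem_sup.mp ha
      have hKb : K b = b := by
        refine Submodule.mul_induction_on hb ?_ ?_
        · rintro r ⟨y, rfl⟩ a ha
          rw [hKmul, hK0 a ha, hτ0 y a ha, map_zero, sub_zero]
        · intro p q hp hq; rw [map_add, hp, hq]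
      constructor
      · rw [map_add, hKb, hK0 c hc]
        exact add_mem (hRF 0 hb) (hmono (Nat.le_succ 0) hc)
      · rw [map_add, hKb, hK0 c hc, sub_self]
        exact zero_mem _
    | succ n ih =>
      intro a ha
      rw [hsucc (n + 1)] at ha
      obtain ⟨b, hb, c, hc, rfl⟩ := Submodule.mem_sup.mp ha
      have hbP : K b ∈ F (n + 2) ∧ K b - b ∈ F (n + 1) := by
        refine Submodule.mul_induction_on hb ?_ ?_
        · rintro r ⟨y, rfl⟩ a ha
          obtain ⟨hKa, hKa'⟩ := ih a ha
          have hτa : K (τ y a) ∈ F (n + 1) := (ih _ (hτF y (n + 1) a ha)).1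
          constructor
          · rw [hKmul]
            exact sub_mem (hRF (n + 1) (Submodule.mul_mem_mul ⟨y, rfl⟩ hKa))
              (hmono (Nat.le_succ (n + 1)) hτa)
          · have : K (TensorAlgebra.ι k y * a) - TensorAlgebra.ι k y * a
                = TensorAlgebra.ι k y * (K a - a) - K (τ y a) := by
              rw [hKmul, mul_sub]; abel
            rw [this]
            exact sub_mem (hRF n (Submodule.mul_mem_mul ⟨y, rfl⟩ hKa')) hτa
        · intro p q hp hq
          exact ⟨by rw [map_add]; exact add_mem hp.1 hq.1,
            by rw [map_add, add_sub_add_comm]; exact add_mem hp.2 hq.2⟩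
      obtain ⟨hcK, hcK'⟩ := ih c hc
      refine ⟨?_, ?_⟩
      · rw [map_add]
        exact add_mem hbP.1 (hmono (Nat.le_succ (n + 1)) hcK)
      · rw [map_add, add_sub_add_comm]
        exact add_mem hbP.2 (hmono (Nat.le_succ n) hcK')
  -- every element lies in some F n
  have hexists : ∀ a : T, ∃ n, a ∈ F n := by
    intro a
    induction a using TensorAlgebra.induction with
    | algebraMap r =>
      refine ⟨0, ?_⟩
      show _ ∈ (R ⊔ 1) ^ 0
      rw [pow_zero]
      exact Submodule.algebraMap_mem r
    | ι x =>
      refine ⟨1, ?_⟩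
      show _ ∈ (R ⊔ 1) ^ 1
      rw [pow_one]
      exact Submodule.mem_sup_left ⟨x, rfl⟩
    | mul a b ha hb =>
      obtain ⟨m, hm⟩ := ha; obtain ⟨n, hn⟩ := hb
      refine ⟨m + n, ?_⟩
      have hpow : F (m + n) = F m * F n := pow_add _ m n
      rw [hpow]
      exact Submodule.mul_mem_mul hm hn
    | add a b ha hb =>
      obtain ⟨m, hm⟩ := ha; obtain ⟨n, hn⟩ := hb
      exact ⟨max m n, add_mem (hmono (le_max_left m n) hm) (hmono (le_max_right m n) hn)⟩
  -- injectivity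
  have hinj0 : ∀ n, ∀ a ∈ F n, K a = 0 → a = 0 := by
    intro n
    induction n with
    | zero => intro a ha h0; rw [← hK0 a ha, h0]
    | succ n ih =>
      intro a ha h0
      have : a ∈ F n := by
        have := (key n a ha).2
        rw [h0, zero_sub, neg_mem_iff] at this
        simpa using this
      exact ih a this h0
  -- surjectivity on each F n
  have hsurj0 : ∀ n, ∀ b ∈ F n, ∃ a ∈ F n, K a = b := by
    intro n
    induction n with
    | zero => intro b hb; exact ⟨b, hb, hK0 b hb⟩
    | succ n ih =>
      intro b hb
      obtain ⟨hKb, hKb'⟩ := key n b hb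
      obtain ⟨a, ha, hKa⟩ := ih (K b - b) hKb'
      refine ⟨b - a, sub_mem hb (hmono (Nat.le_succ n) ha), ?_⟩
      rw [map_sub, hKa, sub_sub_cancel]
  constructor
  · intro a b hab
    have : K (a - b) = 0 := by rw [map_sub, hab, sub_self]
    obtain ⟨n, hn⟩ := hexists (a - b)
    have := hinj0 n _ hn this
    exact sub_eq_zero.mp this
  · intro b
    obtain ⟨n, hn⟩ := hexists b
    obtain ⟨a, _, ha⟩ := hsurj0 n b hn
    exact ⟨a, ha⟩
end

section
/- Let 𝔤 be a nonassociative algebra over a field k of characteristic zero and K its K-operator on T(𝔤). Then Δ ∘ K = (K ⊗ K) ∘ Δ, where Δ is the standard comultiplication of the tensor algebra T(𝔤); i.e., K is a coalgebra automorphism of T(𝔤). -/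
open TensorProduct

/-- The standard comultiplication of the tensor algebra `T(V)`: the unique algebra
homomorphism `T(V) → T(V) ⊗ T(V)` for which every `x ∈ V` is primitive. -/
noncomputable def tensorAlgebraComul (k : Type*) [Field k] (V : Type*) [AddCommGroup V]
    [Module k V] :
    TensorAlgebra k V →ₐ[k] TensorAlgebra k V ⊗[k] TensorAlgebra k V :=
  TensorAlgebra.lift k
    ((TensorProduct.mk k (TensorAlgebra k V) (TensorAlgebra k V) 1).comp (TensorAlgebra.ι k)
      + ((TensorProduct.mk k (TensorAlgebra k V) (TensorAlgebra k V)).flip 1).comp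
          (TensorAlgebra.ι k))

set_option maxHeartbeats 2000000 in
/-- Proposition 1: the K-operator of a nonassociative algebra `𝔤` over a field of
characteristic zero is a coalgebra automorphism of `T(𝔤)`: `Δ ∘ K = (K ⊗ K) ∘ Δ`. -/
theorem kOperator_comul_comm
    (k : Type*) [Field k] [CharZero k] (g : Type*) [AddCommGroup g] [Module k g]
    (d : g →ₗ[k] g →ₗ[k] g)
    (τ : g → TensorAlgebra k g →ₗ[k] TensorAlgebra k g)
    (hτder : ∀ (x : g) (a b : TensorAlgebra k g), τ x (a * b) = τ x a * b + a * τ x b)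
    (hτι : ∀ x y : g, τ x (TensorAlgebra.ι k y) = TensorAlgebra.ι k (d x y))
    (K : TensorAlgebra k g →ₗ[k] TensorAlgebra k g)
    (hK1 : K 1 = 1)
    (hK : ∀ (x : g) (a : TensorAlgebra k g),
      K (TensorAlgebra.ι k x * a + τ x a) = TensorAlgebra.ι k x * K a)
    (a : TensorAlgebra k g) :
    tensorAlgebraComul k g (K a) = TensorProduct.map K K (tensorAlgebraComul k g a) := by
  set Δ := tensorAlgebraComul k g with hΔdef
  have hΔι : ∀ x : g, Δ (TensorAlgebra.ι k x)
      = TensorAlgebra.ι k x ⊗ₜ[k] (1 : TensorAlgebra k g)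
        + (1 : TensorAlgebra k g) ⊗ₜ[k] TensorAlgebra.ι k x := by
    intro x
    simp only [hΔdef, tensorAlgebraComul, TensorAlgebra.lift_ι_apply, LinearMap.add_apply,
      LinearMap.coe_comp, Function.comp_apply, TensorProduct.mk_apply, LinearMap.flip_apply]
    exact add_comm _ _
  -- τ x kills 1
  have hτ1 : ∀ x : g, τ x (1 : TensorAlgebra k g) = 0 := by
    intro x
    have h := hτder x 1 1
    simp only [one_mul, mul_one] at h
    exact (left_eq_add.mp h)
  -- the recursion for K on products
  have hKmul : ∀ (x : g) (a : TensorAlgebra k g),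
      K (TensorAlgebra.ι k x * a) = TensorAlgebra.ι k x * K a - K (τ x a) := by
    intro x a
    have h := hK x a
    rw [map_add] at h
    exact eq_sub_of_add_eq h
  -- D x : the induced derivation on T ⊗ T
  set D : g → TensorAlgebra k g ⊗[k] TensorAlgebra k g →ₗ[k]
      TensorAlgebra k g ⊗[k] TensorAlgebra k g :=
    fun x => (τ x).rTensor _ + (τ x).lTensor _ with hDdef
  have hDtmul : ∀ (x : g) (a b : TensorAlgebra k g),
      D x (a ⊗ₜ[k] b) = τ x a ⊗ₜ[k] b + a ⊗ₜ[k] τ x b := by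
    intro x a b
    simp only [hDdef, LinearMap.add_apply, LinearMap.rTensor_tmul, LinearMap.lTensor_tmul]
  have hDder : ∀ (x : g) (u v : TensorAlgebra k g ⊗[k] TensorAlgebra k g),
      D x (u * v) = D x u * v + u * D x v := by
    intro x u v
    induction u using TensorProduct.induction_on with
    | zero => simp
    | tmul a b =>
      induction v using TensorProduct.induction_on with
      | zero => simp
      | tmul c e =>
        simp only [Algebra.TensorProduct.tmul_mul_tmul, hDtmul, hτder,
          add_tmul, tmul_add, add_mul, mul_add]
        abel
      | add v₁ v₂ ih1 ih2 =>
        simp only [mul_add, map_add, ih1, ih2, add_mul]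
        abel
    | add u₁ u₂ ih1 ih2 =>
      simp only [add_mul, map_add, ih1, ih2, mul_add]
      abel
  -- Δ intertwines τ x with D x
  have hΔτ : ∀ (x : g) (a : TensorAlgebra k g), Δ (τ x a) = D x (Δ a) := by
    intro x a
    induction a using TensorAlgebra.induction with
    | algebraMap r =>
      have h1 : τ x ((algebraMap k (TensorAlgebra k g)) r) = 0 := by
        rw [Algebra.algebraMap_eq_smul_one, map_smul, hτ1, smul_zero]
      have h2 : Δ ((algebraMap k (TensorAlgebra k g)) r)
          = r • ((1 : TensorAlgebra k g) ⊗ₜ[k] (1 : TensorAlgebra k g)) := by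
        rw [Algebra.algebraMap_eq_smul_one, map_smul, map_one, Algebra.TensorProduct.one_def]
      rw [h1, map_zero, h2, map_smul, hDtmul, hτ1]
      simp
    | ι y =>
      rw [hτι, hΔι, hΔι, map_add, hDtmul, hDtmul, hτ1, hτι]
      simp
    | mul a b iha ihb =>
      rw [hτder, map_add, map_mul, map_mul, map_mul, iha, ihb, hDder]
    | add a b iha ihb =>
      rw [map_add, map_add, map_add, map_add, iha, ihb]
  -- the grading submodules
  set P : ℕ → Submodule k (TensorAlgebra k g) :=
    fun n => (LinearMap.range (TensorAlgebra.ι k : g →ₗ[k] TensorAlgebra k g)) ^ n with hPdef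
  have hP0 : P 0 = Submodule.span k {(1 : TensorAlgebra k g)} := by
    simp only [hPdef, pow_zero, Submodule.one_eq_span]
  have hPsucc : ∀ n, P (n + 1)
      = (LinearMap.range (TensorAlgebra.ι k : g →ₗ[k] TensorAlgebra k g)) * P n := by
    intro n; simp only [hPdef]; exact pow_succ' _ _
  -- τ x preserves each P n
  have hτP : ∀ (x : g) (n : ℕ), ∀ a ∈ P n, τ x a ∈ P n := by
    intro x n
    induction n with
    | zero =>
      intro a ha
      rw [hP0] at ha ⊢
      induction ha using Submodule.span_induction with
      | mem a h =>
        simp only [Set.mem_singleton_iff] at h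
        subst h
        rw [hτ1]; exact Submodule.zero_mem _
      | zero => rw [map_zero]; exact Submodule.zero_mem _
      | add a b _ _ iha ihb => rw [map_add]; exact Submodule.add_mem _ iha ihb
      | smul r a _ iha => rw [map_smul]; exact Submodule.smul_mem _ r iha
    | succ n ih =>
      intro a ha
      rw [hPsucc] at ha ⊢
      refine Submodule.mul_induction_on
        (C := fun y => τ x y ∈ LinearMap.range
          (TensorAlgebra.ι k : g →ₗ[k] TensorAlgebra k g) * P n) ha ?_ ?_
      · intro m hm' b hb
        rw [hτder]
        refine Submodule.add_mem _ (Submodule.mul_mem_mul ?_ hb)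
          (Submodule.mul_mem_mul hm' (ih b hb))
        obtain ⟨y, rfl⟩ := hm'
        rw [hτι]
        exact ⟨d x y, rfl⟩
      · intro u v ihu ihv
        rw [map_add]; exact Submodule.add_mem _ ihu ihv
  -- the main statement on each P n
  have main : ∀ n : ℕ, ∀ a ∈ P n,
      Δ (K a) = TensorProduct.map K K (Δ a) := by
    intro n
    induction n with
    | zero =>
      intro a ha
      rw [hP0] at ha
      induction ha using Submodule.span_induction with
      | mem a h =>
        simp only [Set.mem_singleton_iff] at h
        subst h
        rw [hK1, map_one, Algebra.TensorProduct.one_def, map_tmul, hK1]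
      | zero => simp only [map_zero]
      | add a b _ _ iha ihb => rw [map_add, map_add, map_add, map_add, iha, ihb]
      | smul r a _ iha => rw [map_smul, map_smul, map_smul, map_smul, iha]
    | succ n ih =>
      intro a ha
      rw [hPsucc] at ha
      refine Submodule.mul_induction_on
        (C := fun y => Δ (K y) = TensorProduct.map K K (Δ y)) ha ?_ ?_
      · intro m hm' b hb
        obtain ⟨x, rfl⟩ := hm'
        have hτb : τ x b ∈ P n := hτP x n b hb
        rw [hKmul, map_sub, map_mul, hΔι, ih _ hτb, ih _ hb, map_mul, hΔι, hΔτ]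
        -- now a pure algebraic identity in z := Δ b
        have key : ∀ z : TensorAlgebra k g ⊗[k] TensorAlgebra k g,
            (TensorAlgebra.ι k x ⊗ₜ[k] (1 : TensorAlgebra k g)
                + (1 : TensorAlgebra k g) ⊗ₜ[k] TensorAlgebra.ι k x)
                * TensorProduct.map K K z
              - TensorProduct.map K K (D x z)
            = TensorProduct.map K K
                ((TensorAlgebra.ι k x ⊗ₜ[k] (1 : TensorAlgebra k g)
                  + (1 : TensorAlgebra k g) ⊗ₜ[k] TensorAlgebra.ι k x) * z) := by
          intro z
          induction z using TensorProduct.induction_on with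
          | zero => simp
          | tmul c e =>
            rw [hDtmul]
            simp only [map_tmul, add_mul, Algebra.TensorProduct.tmul_mul_tmul,
              one_mul, mul_one, map_add, map_tmul]
            rw [hKmul x c, hKmul x e, sub_tmul, tmul_sub]
            abel
          | add u v ihu ihv =>
            rw [map_add, mul_add, map_add, map_add, mul_add, map_add, ← ihu, ← ihv]
            abel
        exact key (Δ b)
      · intro u v ihu ihv
        rw [map_add, map_add, map_add, map_add, ihu, ihv]
  -- every element lies in some P n, since the grading is exhaustive
  have htop : (⨆ n, P n) = ⊤ :=
    (DirectSum.Decomposition.isInternal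
      ((LinearMap.range (TensorAlgebra.ι k : g →ₗ[k] TensorAlgebra k g) ^ ·) :
        ℕ → Submodule k (TensorAlgebra k g))).submodule_iSup_eq_top
  have ha : a ∈ ⨆ n, P n := htop ▸ Submodule.mem_top
  induction ha using Submodule.iSup_induction' with
  | mem n a ha => exact main n a ha
  | zero => simp only [map_zero]
  | add a b _ _ iha ihb => rw [map_add, map_add, map_add, map_add, iha, ihb]
end

section
/- Let 𝔤 be a nonassociative algebra over a field k of characteristic zero, and let τ: T(𝔤) → End_k(T(𝔤)) be the algebra homomorphism determined by τ(x) = τ_x for x ∈ 𝔤, where τ_x is the derivation of T(𝔤) extending left multiplication y ↦ x ⋄ y. Then for all a, b1, b2 ∈ T(𝔤): τ(a)(b1 ⊗ b2) = Σ_{(a)} (τ(a_{(1)}) b1) ⊗ (τ(a_{(2)}) b2), where Δ(a) = Σ_{(a)} a_{(1)} ⊗ a_{(2)} is the standard comultiplication. -/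
open TensorProduct

set_option maxHeartbeats 1000000
set_option synthInstance.maxHeartbeats 100000

lemma hthh_eq (k : Type*) [Field k] (M : Type*) [AddCommGroup M] [Module k M]
    (x : Module.End k M ⊗[k] Module.End k M) :
    TensorProduct.homTensorHomMap (RingHom.id k) M M M M x
      = Module.endTensorEndAlgHom (R := k) (S := k) (A := k) x := by
  induction x using TensorProduct.induction_on with
  | zero => simp
  | tmul f g => ext m n; simp [Module.endTensorEndAlgHom_apply]
  | add x y hx hy => rw [map_add, map_add, hx, hy]

noncomputable def tauPhi (k : Type*) [Field k] (g : Type*) [AddCommGroup g] [Module k g]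
    (τ : TensorAlgebra k g →ₐ[k] Module.End k (TensorAlgebra k g)) :
    TensorAlgebra k g →ₐ[k] Module.End k (TensorAlgebra k g ⊗[k] TensorAlgebra k g) :=
  (Module.endTensorEndAlgHom (R := k) (S := k) (A := k)).comp
    ((Algebra.TensorProduct.map τ τ).comp (tensorAlgebraComul k g))

lemma comul_ι (k : Type*) [Field k] (g : Type*) [AddCommGroup g] [Module k g] (x : g) :
    tensorAlgebraComul k g (TensorAlgebra.ι k x)
      = TensorAlgebra.ι k x ⊗ₜ[k] 1 + 1 ⊗ₜ[k] TensorAlgebra.ι k x := by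
  rw [tensorAlgebraComul, TensorAlgebra.lift_ι_apply]
  simp only [LinearMap.add_apply, LinearMap.coe_comp, Function.comp_apply,
    TensorProduct.mk_apply, LinearMap.flip_apply]
  rw [add_comm]

lemma tau_meas_aux (k : Type*) [Field k] (g : Type*) [AddCommGroup g] [Module k g]
    (τ : TensorAlgebra k g →ₐ[k] Module.End k (TensorAlgebra k g))
    (hτder : ∀ (x : g) (a b : TensorAlgebra k g),
      τ (TensorAlgebra.ι k x) (a * b) =
        τ (TensorAlgebra.ι k x) a * b + a * τ (TensorAlgebra.ι k x) b)
    (a b₁ b₂ : TensorAlgebra k g) :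
    τ a (b₁ * b₂) = LinearMap.mul' k (TensorAlgebra k g) (tauPhi k g τ a (b₁ ⊗ₜ[k] b₂)) := by
  induction a using TensorAlgebra.induction generalizing b₁ b₂ with
  | algebraMap r =>
    rw [AlgHom.commutes, AlgHom.commutes, Module.algebraMap_end_apply,
      Module.algebraMap_end_apply, map_smul, LinearMap.mul'_apply]
  | ι x =>
    have h1 : tauPhi k g τ (TensorAlgebra.ι k x)
        = Module.endTensorEndAlgHom (R := k) (S := k) (A := k)
            (τ (TensorAlgebra.ι k x) ⊗ₜ[k] 1 + 1 ⊗ₜ[k] τ (TensorAlgebra.ι k x)) := by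
      rw [tauPhi, AlgHom.comp_apply, AlgHom.comp_apply, comul_ι]
      rw [show (Algebra.TensorProduct.map τ τ)
            (TensorAlgebra.ι k x ⊗ₜ[k] 1 + 1 ⊗ₜ[k] TensorAlgebra.ι k x)
          = τ (TensorAlgebra.ι k x) ⊗ₜ[k] 1 + 1 ⊗ₜ[k] τ (TensorAlgebra.ι k x) by
        rw [map_add, Algebra.TensorProduct.map_tmul, Algebra.TensorProduct.map_tmul,
          map_one τ]]
    rw [h1, map_add, LinearMap.add_apply, Module.endTensorEndAlgHom_apply,
      Module.endTensorEndAlgHom_apply, map_add, TensorProduct.AlgebraTensorModule.map_tmul,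
      TensorProduct.AlgebraTensorModule.map_tmul, hτder x b₁ b₂]
    simp [Module.End.one_apply]
  | mul a₁ a₂ ih1 ih2 =>
    have hm1 := map_mul τ a₁ a₂
    have hm2 := map_mul (tauPhi k g τ) a₁ a₂
    rw [hm1, hm2, Module.End.mul_apply, Module.End.mul_apply, ih2 b₁ b₂]
    generalize tauPhi k g τ a₂ (b₁ ⊗ₜ[k] b₂) = c
    induction c using TensorProduct.induction_on with
    | zero => simp
    | tmul c₁ c₂ => simpa using ih1 c₁ c₂
    | add x y hx hy => rw [map_add, map_add, map_add, hx, hy, map_add]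
  | add a₁ a₂ ih1 ih2 =>
    rw [map_add, map_add, LinearMap.add_apply, LinearMap.add_apply, map_add,
      ih1 b₁ b₂, ih2 b₁ b₂]

/-- Measuring property of `τ` (right square of Proposition 2): for the algebra homomorphism
`τ : T(𝔤) → End(T(𝔤))` with `τ(x) = τ_x` (the derivation extending left `⋄`-multiplication
by `x`), one has `τ(a)(b₁ ⊗ b₂) = Σ_{(a)} (τ(a₍₁₎) b₁) ⊗ (τ(a₍₂₎) b₂)` for all
`a, b₁, b₂ ∈ T(𝔤)`, where `Δ(a) = Σ_{(a)} a₍₁₎ ⊗ a₍₂₎` is the standard comultiplication. -/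
theorem tau_measures_multiplication
    (k : Type*) [Field k] [CharZero k] (g : Type*) [AddCommGroup g] [Module k g]
    (d : g →ₗ[k] g →ₗ[k] g)
    (τ : TensorAlgebra k g →ₐ[k] Module.End k (TensorAlgebra k g))
    (hτder : ∀ (x : g) (a b : TensorAlgebra k g),
      τ (TensorAlgebra.ι k x) (a * b) =
        τ (TensorAlgebra.ι k x) a * b + a * τ (TensorAlgebra.ι k x) b)
    (hτι : ∀ x y : g,
      τ (TensorAlgebra.ι k x) (TensorAlgebra.ι k y) = TensorAlgebra.ι k (d x y))
    (a b₁ b₂ : TensorAlgebra k g) :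
    τ a (b₁ * b₂) =
      LinearMap.mul' k (TensorAlgebra k g)
        ((TensorProduct.homTensorHomMap (RingHom.id k) (TensorAlgebra k g) (TensorAlgebra k g)
            (TensorAlgebra k g) (TensorAlgebra k g)
            ((TensorProduct.map τ.toLinearMap τ.toLinearMap) (tensorAlgebraComul k g a)))
          (b₁ ⊗ₜ[k] b₂)) := by
  have hmap : (TensorProduct.map τ.toLinearMap τ.toLinearMap) (tensorAlgebraComul k g a)
      = (Algebra.TensorProduct.map τ τ) (tensorAlgebraComul k g a) := by
    induction (tensorAlgebraComul k g a) using TensorProduct.induction_on with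
    | zero => simp
    | tmul x y => rw [TensorProduct.map_tmul, Algebra.TensorProduct.map_tmul]; rfl
    | add x y hx hy => rw [map_add, map_add, hx, hy]
  rw [hmap, hthh_eq]
  exact tau_meas_aux k g τ hτder a b₁ b₂
end

section
/- With 𝔤, τ, Δ as above, for every a, b ∈ T(𝔤): Δ(τ(a) b) = Σ_{(a)} Σ_{(b)} (τ(a_{(1)}) b_{(1)}) ⊗ (τ(a_{(2)}) b_{(2)}); i.e., the action of T(𝔤) on itself via τ is compatible with the comultiplication (the left square of Proposition 2). -/
set_option maxHeartbeats 1000000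
set_option synthInstance.maxHeartbeats 400000

open TensorProduct

section Aux

variable {k : Type*} [Field k] {g : Type*} [AddCommGroup g] [Module k g]

lemma tensorAlgebraComul_ι (x : g) :
    tensorAlgebraComul k g (TensorAlgebra.ι k x)
      = 1 ⊗ₜ[k] TensorAlgebra.ι k x + TensorAlgebra.ι k x ⊗ₜ[k] 1 := by
  simp [tensorAlgebraComul]

/-- `f ⊗ 1 + 1 ⊗ f` is a derivation on the tensor square when `f` is one. -/
lemma mapD_mul (f : TensorAlgebra k g →ₗ[k] TensorAlgebra k g)
    (hf : ∀ a b, f (a * b) = f a * b + a * f b)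
    (u v : TensorAlgebra k g ⊗[k] TensorAlgebra k g) :
    (TensorProduct.map f LinearMap.id + TensorProduct.map LinearMap.id f :
        TensorAlgebra k g ⊗[k] TensorAlgebra k g →ₗ[k]
          TensorAlgebra k g ⊗[k] TensorAlgebra k g) (u * v)
      = (TensorProduct.map f LinearMap.id + TensorProduct.map LinearMap.id f :
        TensorAlgebra k g ⊗[k] TensorAlgebra k g →ₗ[k]
          TensorAlgebra k g ⊗[k] TensorAlgebra k g) u * v
        + u * (TensorProduct.map f LinearMap.id + TensorProduct.map LinearMap.id f :
        TensorAlgebra k g ⊗[k] TensorAlgebra k g →ₗ[k]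
          TensorAlgebra k g ⊗[k] TensorAlgebra k g) v := by
  set D : TensorAlgebra k g ⊗[k] TensorAlgebra k g →ₗ[k]
      TensorAlgebra k g ⊗[k] TensorAlgebra k g :=
    TensorProduct.map f LinearMap.id + TensorProduct.map LinearMap.id f with hD
  induction u using TensorProduct.induction_on with
  | zero => rw [zero_mul, map_zero, zero_mul, zero_mul, add_zero]
  | add u₁ u₂ h₁ h₂ =>
    rw [add_mul, map_add, h₁, h₂, map_add, add_mul, add_mul]
    abel
  | tmul p q =>
    induction v using TensorProduct.induction_on with
    | zero => rw [mul_zero, map_zero, mul_zero, mul_zero, add_zero]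
    | add v₁ v₂ h₁ h₂ =>
      rw [mul_add, map_add, h₁, h₂, map_add, mul_add, mul_add]
      abel
    | tmul p' q' =>
      simp only [hD, Algebra.TensorProduct.tmul_mul_tmul, LinearMap.add_apply,
        TensorProduct.map_tmul, LinearMap.id_coe, id_eq, hf]
      rw [TensorProduct.add_tmul, TensorProduct.tmul_add, add_mul, mul_add,
        Algebra.TensorProduct.tmul_mul_tmul, Algebra.TensorProduct.tmul_mul_tmul,
        Algebra.TensorProduct.tmul_mul_tmul, Algebra.TensorProduct.tmul_mul_tmul]
      abel

lemma tau_comul_key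
    (d : g →ₗ[k] g →ₗ[k] g)
    (τ : TensorAlgebra k g →ₐ[k] Module.End k (TensorAlgebra k g))
    (hτder : ∀ (x : g) (a b : TensorAlgebra k g),
      τ (TensorAlgebra.ι k x) (a * b) =
        τ (TensorAlgebra.ι k x) a * b + a * τ (TensorAlgebra.ι k x) b)
    (hτι : ∀ x y : g,
      τ (TensorAlgebra.ι k x) (TensorAlgebra.ι k y) = TensorAlgebra.ι k (d x y))
    (a b : TensorAlgebra k g) :
    tensorAlgebraComul k g (τ a b) =
      (Module.endTensorEndAlgHom (R := k) (S := k) (A := k)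
          (M := TensorAlgebra k g) (N := TensorAlgebra k g)).comp
        ((Algebra.TensorProduct.map τ τ).comp (tensorAlgebraComul k g)) a
        (tensorAlgebraComul k g b) := by
  have hτ1 : ∀ x : g, τ (TensorAlgebra.ι k x) 1 = 0 := by
    intro x
    have h := hτder x 1 1
    rw [mul_one, mul_one, one_mul] at h
    exact (right_eq_add.mp h)
  induction a using TensorAlgebra.induction generalizing b with
  | algebraMap r =>
    rw [AlgHom.commutes, AlgHom.commutes, Module.algebraMap_end_apply,
      Module.algebraMap_end_apply, map_smul]
  | ι x =>
    have hΨx : ((Module.endTensorEndAlgHom (R := k) (S := k) (A := k)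
          (M := TensorAlgebra k g) (N := TensorAlgebra k g)).comp
        ((Algebra.TensorProduct.map τ τ).comp (tensorAlgebraComul k g)))
          (TensorAlgebra.ι k x)
        = TensorProduct.map (τ (TensorAlgebra.ι k x)) LinearMap.id
          + TensorProduct.map LinearMap.id (τ (TensorAlgebra.ι k x)) := by
      rw [AlgHom.coe_comp, AlgHom.coe_comp, Function.comp_apply, Function.comp_apply,
        tensorAlgebraComul_ι, map_add, map_add]
      refine TensorProduct.ext' fun p q => ?_
      simp only [Algebra.TensorProduct.map_tmul, map_one,
        Module.endTensorEndAlgHom_apply, LinearMap.add_apply,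
        TensorProduct.AlgebraTensorModule.map_tmul, TensorProduct.map_tmul,
        Module.End.one_apply, LinearMap.id_coe, id_eq]
      abel
    rw [hΨx]
    induction b using TensorAlgebra.induction with
    | algebraMap r =>
      have h0 : (τ (TensorAlgebra.ι k x)) ((algebraMap k (TensorAlgebra k g)) r) = 0 := by
        rw [Algebra.algebraMap_eq_smul_one, map_smul, hτ1, smul_zero]
      have h1 : tensorAlgebraComul k g ((algebraMap k (TensorAlgebra k g)) r)
          = r • ((1 : TensorAlgebra k g) ⊗ₜ[k] (1 : TensorAlgebra k g)) := by
        rw [AlgHom.commutes, Algebra.algebraMap_eq_smul_one, Algebra.TensorProduct.one_def]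
      rw [h0, h1, map_zero, map_smul]
      simp [hτ1]
    | ι y =>
      rw [hτι, tensorAlgebraComul_ι, tensorAlgebraComul_ι]
      simp only [LinearMap.add_apply, map_add, TensorProduct.map_tmul, LinearMap.id_coe,
        id_eq, hτ1, hτι]
      rw [TensorProduct.zero_tmul, TensorProduct.tmul_zero]
      abel
    | mul p q hp hq =>
      rw [hτder, map_add, map_mul, map_mul, hp, hq, map_mul, mapD_mul _ (hτder x)]
    | add p q hp hq =>
      rw [map_add, map_add, map_add, map_add, hp, hq]
  | mul a₁ a₂ h₁ h₂ =>
    rw [map_mul, Module.End.mul_apply, h₁, h₂ b, map_mul, Module.End.mul_apply]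
  | add a₁ a₂ h₁ h₂ =>
    simp only [map_add, LinearMap.add_apply, h₁ b, h₂ b]

end Aux

/-- Left square of Proposition 2: for the algebra homomorphism `τ : T(𝔤) → End(T(𝔤))` with
`τ(x) = τ_x`, the action of `T(𝔤)` on itself via `τ` is compatible with the comultiplication:
`Δ(τ(a) b) = Σ_{(a)} Σ_{(b)} (τ(a₍₁₎) b₍₁₎) ⊗ (τ(a₍₂₎) b₍₂₎)`. -/
theorem tau_compatible_with_comul
    (k : Type*) [Field k] [CharZero k] (g : Type*) [AddCommGroup g] [Module k g]
    (d : g →ₗ[k] g →ₗ[k] g)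
    (τ : TensorAlgebra k g →ₐ[k] Module.End k (TensorAlgebra k g))
    (hτder : ∀ (x : g) (a b : TensorAlgebra k g),
      τ (TensorAlgebra.ι k x) (a * b) =
        τ (TensorAlgebra.ι k x) a * b + a * τ (TensorAlgebra.ι k x) b)
    (hτι : ∀ x y : g,
      τ (TensorAlgebra.ι k x) (TensorAlgebra.ι k y) = TensorAlgebra.ι k (d x y))
    (a b : TensorAlgebra k g) :
    tensorAlgebraComul k g (τ a b) =
      (TensorProduct.homTensorHomMap (RingHom.id k) (TensorAlgebra k g) (TensorAlgebra k g)
          (TensorAlgebra k g) (TensorAlgebra k g)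
          ((TensorProduct.map τ.toLinearMap τ.toLinearMap) (tensorAlgebraComul k g a)))
        (tensorAlgebraComul k g b) := by
  rw [tau_comul_key d τ hτder hτι a b]
  congr 1
end

section
/- With notation as in the cocycle identity, defining the action a · b = τ(a)b of T(𝔤) on itself, the inverse K-operator satisfies K^{−1}(a ⊗ b) = Σ_{(a)} K^{−1}(a_{(1)}) ⊗ (a_{(2)} · K^{−1}(b)) for all a, b ∈ T(𝔤); i.e., K^{−1} is a cocycle for this action. -/
open TensorProduct

/-- Any submodule of `T(g)` containing `1` and closed under left multiplication by
generators `ι x` is the whole algebra. -/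
theorem tensorAlgebra_submodule_eq_top {k : Type*} [Field k] {g : Type*} [AddCommGroup g]
    [Module k g] (S : Submodule k (TensorAlgebra k g)) (h1 : (1 : TensorAlgebra k g) ∈ S)
    (hmul : ∀ (x : g) (c : TensorAlgebra k g), c ∈ S → TensorAlgebra.ι k x * c ∈ S)
    (a : TensorAlgebra k g) : a ∈ S := by
  have key : ∀ a : TensorAlgebra k g, ∀ c ∈ S, a * c ∈ S := by
    intro a
    induction a using TensorAlgebra.induction with
    | algebraMap r =>
        intro c hc
        rw [Algebra.algebraMap_eq_smul_one, smul_mul_assoc, one_mul]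
        exact S.smul_mem r hc
    | ι x => intro c hc; exact hmul x c hc
    | mul a1 a2 ha1 ha2 => intro c hc; rw [mul_assoc]; exact ha1 _ (ha2 c hc)
    | add a1 a2 ha1 ha2 => intro c hc; rw [add_mul]; exact S.add_mem (ha1 c hc) (ha2 c hc)
  simpa using key a 1 h1

/-- The inverse K-operator is a cocycle: defining the action `a · b = τ(a)b` of `T(𝔤)` on
itself, the inverse `L = K⁻¹` of the K-operator satisfies
`K⁻¹(a ⊗ b) = Σ_{(a)} K⁻¹(a₍₁₎) ⊗ (a₍₂₎ · K⁻¹(b))` for all `a, b ∈ T(𝔤)`. -/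
theorem kOperator_inverse_is_cocycle
    (k : Type*) [Field k] [CharZero k] (g : Type*) [AddCommGroup g] [Module k g]
    (d : g →ₗ[k] g →ₗ[k] g)
    (τ : TensorAlgebra k g →ₐ[k] Module.End k (TensorAlgebra k g))
    (hτder : ∀ (x : g) (a b : TensorAlgebra k g),
      τ (TensorAlgebra.ι k x) (a * b) =
        τ (TensorAlgebra.ι k x) a * b + a * τ (TensorAlgebra.ι k x) b)
    (hτι : ∀ x y : g,
      τ (TensorAlgebra.ι k x) (TensorAlgebra.ι k y) = TensorAlgebra.ι k (d x y))
    (K L : TensorAlgebra k g →ₗ[k] TensorAlgebra k g)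
    (hK1 : K 1 = 1)
    (hK : ∀ (x : g) (a : TensorAlgebra k g),
      K (TensorAlgebra.ι k x * a + τ (TensorAlgebra.ι k x) a) =
        TensorAlgebra.ι k x * K a)
    (hLK : ∀ a, L (K a) = a) (hKL : ∀ a, K (L a) = a)
    (a b : TensorAlgebra k g) :
    L (a * b) =
      (TensorProduct.lift
          (LinearMap.mk₂ k (fun c e => L c * τ e (L b))
            (fun c c' e => by simp [map_add, add_mul])
            (fun s c e => by simp [map_smul, smul_mul_assoc])
            (fun c e e' => by simp [map_add, mul_add])
            (fun s c e => by simp [map_smul, mul_smul_comm])))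
        (tensorAlgebraComul k g a) := by
  suffices main : ∀ (B : TensorAlgebra k g →ₗ[k] TensorAlgebra k g →ₗ[k] TensorAlgebra k g),
      (∀ c e, B c e = L c * τ e (L b)) →
      L (a * b) = TensorProduct.lift B (tensorAlgebraComul k g a) by
    exact main _ (fun c e => rfl)
  intro B hB
  have hL1 : L 1 = 1 := by have := hLK 1; rwa [hK1] at this
  have hLmul : ∀ (x : g) (c : TensorAlgebra k g),
      L (TensorAlgebra.ι k x * c) =
        TensorAlgebra.ι k x * L c + τ (TensorAlgebra.ι k x) (L c) := by
    intro x c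
    conv_lhs => rw [← hKL c]
    rw [← hK, hLK]
  have hBapp : ∀ c e : TensorAlgebra k g,
      TensorProduct.lift B (c ⊗ₜ[k] e) = L c * τ e (L b) := by
    intro c e; rw [TensorProduct.lift.tmul, hB]
  have hΔι : ∀ x : g, tensorAlgebraComul k g (TensorAlgebra.ι k x) =
      1 ⊗ₜ[k] TensorAlgebra.ι k x + TensorAlgebra.ι k x ⊗ₜ[k] 1 := by
    intro x
    simp [tensorAlgebraComul, TensorAlgebra.lift_ι_apply]
  -- key derivation-type property of `lift B`
  have hkey : ∀ (x : g) (t : TensorAlgebra k g ⊗[k] TensorAlgebra k g),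
      TensorProduct.lift B
          ((1 ⊗ₜ[k] TensorAlgebra.ι k x + TensorAlgebra.ι k x ⊗ₜ[k] (1 : TensorAlgebra k g))
            * t) =
        TensorAlgebra.ι k x * TensorProduct.lift B t +
          τ (TensorAlgebra.ι k x) (TensorProduct.lift B t) := by
    intro x t
    induction t using TensorProduct.induction_on with
    | zero => simp
    | tmul c e =>
        rw [add_mul, Algebra.TensorProduct.tmul_mul_tmul, Algebra.TensorProduct.tmul_mul_tmul,
          one_mul, one_mul, map_add, hBapp, hBapp, hBapp, map_mul, Module.End.mul_apply,
          hLmul, hτder]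
        noncomm_ring
    | add t1 t2 h1 h2 =>
        simp only [mul_add, map_add, h1, h2]
        abel
  -- the submodule of elements c with K (lift B (Δ c)) = c * b
  have hmain : ∀ c : TensorAlgebra k g,
      K (TensorProduct.lift B (tensorAlgebraComul k g c)) = c * b := by
    intro c
    have hmem := tensorAlgebra_submodule_eq_top
      (LinearMap.ker ((K.comp ((TensorProduct.lift B).comp
          (tensorAlgebraComul k g).toLinearMap)) - LinearMap.mulRight k b))
      (by
        simp only [LinearMap.mem_ker, LinearMap.sub_apply, LinearMap.comp_apply,
          LinearMap.mulRight_apply, AlgHom.toLinearMap_apply, sub_eq_zero]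
        rw [map_one, Algebra.TensorProduct.one_def, hBapp, hL1, map_one,
          Module.End.one_apply, one_mul, hKL, one_mul])
      (by
        intro x c hc
        simp only [LinearMap.mem_ker, LinearMap.sub_apply, LinearMap.comp_apply,
          LinearMap.mulRight_apply, AlgHom.toLinearMap_apply, sub_eq_zero] at hc ⊢
        rw [map_mul, hΔι, hkey, hK, hc, mul_assoc])
      c
    simpa only [LinearMap.mem_ker, LinearMap.sub_apply, LinearMap.comp_apply,
      LinearMap.mulRight_apply, AlgHom.toLinearMap_apply, sub_eq_zero] using hmem
  calc L (a * b) = L (K (TensorProduct.lift B (tensorAlgebraComul k g a))) := by rw [hmain]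
    _ = TensorProduct.lift B (tensorAlgebraComul k g a) := hLK _
end

section
/- If v, w are vector fields on a manifold with an affine connection such that ∇_v v = 0 and ∇_v w = 0, then μ_E(v^{⊗k}) = ∇_v^k for every k > 0 on any vector bundle E with connection; in particular μ_T(v^{⊗k})(v^{⊗(l−1)} ⊗ q₂(v)w ⊗ v^{⊗(m−l)}) = v^{⊗(l−1)} ⊗ q_{k+2}(v)w ⊗ v^{⊗(m−l)}, where q_n(v)w = (v^{⊗(n−2)} · ∇^{n−2} R)(w,v)v. -/
open TensorProduct PiTensorProduct

/-- Iterated ("higher") covariant derivative contracted with vector fields (the operator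
`μ_E(v₁ ⊗ ⋯ ⊗ vₙ)`-style contraction `(∇ⁿ u)(v₁,…,vₙ)`). -/
def covIter {V S : Type*} [AddCommGroup S] (conn : V → S → S) (aconn : V → V → V) :
    (n : ℕ) → S → (Fin n → V) → S
  | 0, u, _ => u
  | n + 1, u, w =>
      conn (w 0) (covIter conn aconn n u fun i => w i.succ) -
        ∑ i : Fin n,
          covIter conn aconn n u
            (Function.update (fun j : Fin n => w j.succ) i (aconn (w 0) (w i.succ)))

/-- Iterated covariant derivative of a `(1,3)`-tensor field (such as a curvature tensor),
contracted with vector fields: `derTensor aconn n T (w₁,…,wₙ) (u₁,u₂,u₃) = (∇ⁿT)(w; u)`. -/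
def derTensor {V : Type*} [AddCommGroup V] (aconn : V → V → V) :
    (n : ℕ) → ((Fin 3 → V) → V) → (Fin n → V) → (Fin 3 → V) → V
  | 0, T, _, vs => T vs
  | n + 1, T, w, vs =>
      aconn (w 0) (derTensor aconn n T (fun i => w i.succ) vs) -
        (∑ i : Fin n,
          derTensor aconn n T
            (Function.update (fun j : Fin n => w j.succ) i (aconn (w 0) (w i.succ))) vs) -
        ∑ j : Fin 3,
          derTensor aconn n T (fun i => w i.succ) (Function.update vs j (aconn (w 0) (vs j)))

/-- The curvature tensor `R(u,v)w = ∇_u ∇_v w − ∇_v ∇_u w − ∇_{[u,v]} w` of an affine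
connection `C` with Lie bracket `B`, as a `(1,3)`-tensor. -/
def curvTensor {V : Type*} [AddCommGroup V] (C : V → V → V) (B : V → V → V) : (Fin 3 → V) → V :=
  fun vs => C (vs 0) (C (vs 1) (vs 2)) - C (vs 1) (C (vs 0) (vs 2)) - C (B (vs 0) (vs 1)) (vs 2)


section Aux

variable {V S : Type*} [AddCommGroup S] [AddCommGroup V]

lemma covIter_zero (conn : V → S → S) (aconn : V → V → V)
    (h1 : ∀ u, conn 0 u = 0) (h2 : ∀ v, conn v 0 = 0)
    (h3 : ∀ x, aconn 0 x = 0) (h4 : ∀ x, aconn x 0 = 0) :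
    ∀ (n : ℕ) (u : S) (w : Fin n → V), (∃ i, w i = 0) → covIter conn aconn n u w = 0 := by
  intro n
  induction n with
  | zero => rintro u w ⟨i, -⟩; exact absurd i.2 (by simp)
  | succ n ih =>
    rintro u w ⟨i, hi⟩
    rw [covIter]
    rcases Fin.eq_zero_or_eq_succ i with h | ⟨j, rfl⟩
    · subst h
      rw [hi, h1]
      rw [Finset.sum_eq_zero, sub_zero]
      intro i' _
      refine ih u _ ⟨i', ?_⟩
      simp [hi, h3]
    · have htail : (fun i => w i.succ) j = 0 := hi
      rw [ih u _ ⟨j, htail⟩, h2, zero_sub, neg_eq_zero]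
      refine Finset.sum_eq_zero fun i' _ => ih u _ ⟨j, ?_⟩
      rcases eq_or_ne i' j with rfl | hne
      · simp [hi, h4]
      · simp [Function.update_of_ne (Ne.symm hne), htail]

lemma covIter_const (conn : V → S → S) (aconn : V → V → V)
    (h1 : ∀ u, conn 0 u = 0) (h2 : ∀ v, conn v 0 = 0)
    (h3 : ∀ x, aconn 0 x = 0) (h4 : ∀ x, aconn x 0 = 0)
    (v : V) (hv : aconn v v = 0) :
    ∀ (k : ℕ) (u : S), covIter conn aconn k u (fun _ => v) = (fun s => conn v s)^[k] u := by
  intro k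
  induction k with
  | zero => intro u; simp [covIter]
  | succ k ih =>
    intro u
    rw [covIter]
    have : ∀ i : Fin k,
        covIter conn aconn k u
          (Function.update (fun _ : Fin k => v) i (aconn v v)) = 0 := by
      intro i
      exact covIter_zero conn aconn h1 h2 h3 h4 k u _ ⟨i, by simp [hv]⟩
    rw [Finset.sum_eq_zero fun i _ => this i, sub_zero, ih,
      Function.iterate_succ_apply']

lemma derTensor_zero (aconn : V → V → V)
    (h3 : ∀ x, aconn 0 x = 0) (h4 : ∀ x, aconn x 0 = 0)
    (T : (Fin 3 → V) → V) (hT : ∀ vs : Fin 3 → V, (∃ j, vs j = 0) → T vs = 0) :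
    ∀ (n : ℕ) (w : Fin n → V) (vs : Fin 3 → V),
      ((∃ i, w i = 0) ∨ (∃ j, vs j = 0)) → derTensor aconn n T w vs = 0 := by
  intro n
  induction n with
  | zero =>
    rintro w vs (⟨i, -⟩ | hj)
    · exact absurd i.2 (by simp)
    · exact hT vs hj
  | succ n ih =>
    rintro w vs (⟨i, hi⟩ | ⟨j, hj⟩)
    · rw [derTensor]
      rcases Fin.eq_zero_or_eq_succ i with h | ⟨j, rfl⟩
      · subst h
        rw [hi, h3]
        rw [Finset.sum_eq_zero, Finset.sum_eq_zero, sub_zero, sub_zero]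
        · intro j _
          exact ih _ _ (Or.inr ⟨j, by simp [hi, h3]⟩)
        · intro i' _
          exact ih _ _ (Or.inl ⟨i', by simp [hi, h3]⟩)
      · have htail : (fun i => w i.succ) j = 0 := hi
        rw [ih _ _ (Or.inl ⟨j, htail⟩), h4,
          Finset.sum_eq_zero, Finset.sum_eq_zero, sub_zero, sub_zero]
        · intro j' _
          exact ih _ _ (Or.inl ⟨j, htail⟩)
        · intro i' _
          refine ih _ _ (Or.inl ⟨j, ?_⟩)
          rcases eq_or_ne i' j with rfl | hne
          · simp [hi, h4]
          · simp [Function.update_of_ne (Ne.symm hne), htail]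
    · rw [derTensor]
      rw [ih _ _ (Or.inr ⟨j, hj⟩), h4,
        Finset.sum_eq_zero, Finset.sum_eq_zero, sub_zero, sub_zero]
      · intro j' _
        refine ih _ _ (Or.inr ⟨j, ?_⟩)
        rcases eq_or_ne j' j with rfl | hne
        · simp [hj, h4]
        · simp [Function.update_of_ne (Ne.symm hne), hj]
      · intro i' _
        exact ih _ _ (Or.inr ⟨j, hj⟩)

end Aux

/-- Lemma: if `∇_v v = 0` and `∇_v w = 0` (integral curves of `v` are geodesics and `w` is
parallel along them), then `μ_E(v^{⊗k}) = ∇_v^k` for every `k > 0` on any bundle `E` with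
connection; in particular, on the tensor bundle `T^m M`,
`μ_T(v^{⊗k})(v^{⊗(l−1)} ⊗ q₂(v)w ⊗ v^{⊗(m−l)}) = v^{⊗(l−1)} ⊗ q_{k+2}(v)w ⊗ v^{⊗(m−l)}`,
where `q_{n}(v)w = (v^{⊗(n−2)} · ∇^{n−2}R)(w,v)v`.  Algebraic Koszul-style model: `A` is the
algebra of functions, `V` the module of vector fields with bracket `B`, action `D` on
functions and affine connection `Ca`; `S` models the sections of an arbitrary bundle with
connection `Cs`; `⨂[A] (i : Fin m), V` models `Γ(T^m M)` with its induced connection `Ct`;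
`derTensor Ca k (curvTensor Ca B) (fun _ => v) ![w, v, v]` is `q_{k+2}(v)w`. -/
theorem parallel_fields_covariant_power
    (A : Type*) [CommRing A] [Algebra ℝ A]
    (V : Type*) [AddCommGroup V] [Module A V]
    (D : V → A → A)
    (hDv : ∀ v w f, D (v + w) f = D v f + D w f)
    (hDs : ∀ (f : A) (v) (g), D (f • v) g = f * D v g)
    (hDadd : ∀ v f g, D v (f + g) = D v f + D v g)
    (hDder : ∀ v f g, D v (f * g) = f * D v g + D v f * g)
    (B : V → V → V)
    (hB : ∀ u v f, D (B u v) f = D u (D v f) - D v (D u f))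
    -- the affine connection on vector fields
    (Ca : V → V → V)
    (hCav : ∀ v w u, Ca (v + w) u = Ca v u + Ca w u)
    (hCas : ∀ (f : A) v u, Ca (f • v) u = f • Ca v u)
    (hCaadd : ∀ v u u', Ca v (u + u') = Ca v u + Ca v u')
    (hCaleib : ∀ v (f : A) u, Ca v (f • u) = f • Ca v u + D v f • u)
    (htorsion : ∀ u v, Ca u v - Ca v u = B u v)
    -- an arbitrary vector bundle with connection
    (S : Type*) [AddCommGroup S] [Module A S]
    (Cs : V → S → S)
    (hsv : ∀ v w u, Cs (v + w) u = Cs v u + Cs w u)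
    (hss : ∀ (f : A) v u, Cs (f • v) u = f • Cs v u)
    (hsadd : ∀ v u u', Cs v (u + u') = Cs v u + Cs v u')
    (hsleib : ∀ v (f : A) u, Cs v (f • u) = f • Cs v u + D v f • u)
    -- the induced connection on the `m`-th contravariant tensor bundle
    (m : ℕ)
    (Ct : V → (⨂[A] (_ : Fin m), V) → (⨂[A] (_ : Fin m), V))
    (htv : ∀ v w u, Ct (v + w) u = Ct v u + Ct w u)
    (hts : ∀ (f : A) v u, Ct (f • v) u = f • Ct v u)
    (htadd : ∀ v u u', Ct v (u + u') = Ct v u + Ct v u')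
    (htleib : ∀ v (f : A) u, Ct v (f • u) = f • Ct v u + D v f • u)
    (htprod : ∀ (v' : V) (u : Fin m → V),
      Ct v' (tprod A u) = ∑ i : Fin m, tprod A (Function.update u i (Ca v' (u i))))
    -- `v` has geodesic integral curves and `w` is parallel along them
    (v w : V) (hv : Ca v v = 0) (hw : Ca v w = 0) :
    (∀ k : ℕ, 0 < k → ∀ u : S,
        covIter Cs Ca k u (fun _ => v) = (fun s => Cs v s)^[k] u) ∧
    (∀ (k : ℕ) (p : Fin m),
        covIter Ct Ca k
            (tprod A fun i =>
              if i = p then derTensor Ca 0 (curvTensor Ca B) (fun _ => v) ![w, v, v] else v)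
            (fun _ => v) =
          tprod A fun i =>
            if i = p then derTensor Ca k (curvTensor Ca B) (fun _ => v) ![w, v, v] else v) := by
  -- zero lemmas for the various connections
  have Ca0 : ∀ u, Ca (0:V) u = 0 := fun u => by
    have h := hCav 0 0 u; rw [add_zero] at h; exact left_eq_add.mp h
  have Ca0' : ∀ u, Ca u (0:V) = 0 := fun u => by
    have h := hCaadd u 0 0; rw [add_zero] at h; exact left_eq_add.mp h
  have Cs0 : ∀ u, Cs (0:V) u = 0 := fun u => by
    have h := hsv 0 0 u; rw [add_zero] at h; exact left_eq_add.mp h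
  have Cs0' : ∀ u, Cs u (0:S) = 0 := fun u => by
    have h := hsadd u 0 0; rw [add_zero] at h; exact left_eq_add.mp h
  have Ct0 : ∀ u, Ct (0:V) u = 0 := fun u => by
    have h := htv 0 0 u; rw [add_zero] at h; exact left_eq_add.mp h
  have Ct0' : ∀ u, Ct u (0 : ⨂[A] (_ : Fin m), V) = 0 := fun u => by
    have h := htadd u 0 0; rw [add_zero] at h; exact left_eq_add.mp h
  -- the curvature tensor vanishes when one of its slots is zero
  have hB0 : ∀ u, B (0:V) u = 0 := fun u => by
    rw [← htorsion, Ca0, Ca0', sub_zero]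
  have hB0' : ∀ u, B u (0:V) = 0 := fun u => by
    rw [← htorsion, Ca0, Ca0', zero_sub, neg_zero]
  have hT0 : ∀ vs : Fin 3 → V, (∃ j, vs j = 0) → curvTensor Ca B vs = 0 := by
    rintro vs ⟨j, hj⟩
    fin_cases j <;>
      simp [curvTensor, hj, Ca0, Ca0', hB0, hB0'] at *
  -- q (k) = derTensor level k
  set q : ℕ → V := fun k => derTensor Ca k (curvTensor Ca B) (fun _ => v) ![w, v, v] with hq
  have hvs : ∀ j : Fin 3, Ca v ((![w, v, v] : Fin 3 → V) j) = 0 := by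
    intro j; fin_cases j <;> simp [hv, hw]
  have hqsucc : ∀ k, q (k + 1) = Ca v (q k) := by
    intro k
    rw [hq]
    show derTensor Ca (k+1) (curvTensor Ca B) (fun _ => v) ![w, v, v] = _
    rw [derTensor]
    rw [Finset.sum_eq_zero, Finset.sum_eq_zero, sub_zero, sub_zero]
    · intro j _
      exact derTensor_zero Ca Ca0 Ca0' _ hT0 k _ _ (Or.inr ⟨j, by simp [hvs j]⟩)
    · intro i _
      exact derTensor_zero Ca Ca0 Ca0' _ hT0 k _ _ (Or.inl ⟨i, by simp [hv]⟩)
  constructor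
  · intro k _ u
    exact covIter_const Cs Ca Cs0 Cs0' Ca0 Ca0' v hv k u
  · intro k p
    have key : ∀ j : ℕ,
        Ct v (tprod A fun i => if i = p then q j else v) =
          tprod A fun i => if i = p then q (j + 1) else v := by
      intro j
      rw [htprod]
      rw [Finset.sum_eq_single p]
      · congr 1
        funext i
        rcases eq_or_ne i p with rfl | hne
        · simp [hqsucc]
        · simp [Function.update_of_ne hne, hne]
      · intro i _ hip
        have : Function.update (fun i' => if i' = p then q j else v) i
            (Ca v (if i = p then q j else v)) =
            Function.update (fun i' => if i' = p then q j else v) i 0 := by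
          rw [if_neg hip, hv]
        rw [this]
        exact MultilinearMap.map_update_zero (PiTensorProduct.tprod A) _ i
      · intro h; exact absurd (Finset.mem_univ p) h
    have iter : ∀ (k j : ℕ),
        (fun s => Ct v s)^[k] (tprod A fun i => if i = p then q j else v) =
          tprod A fun i => if i = p then q (j + k) else v := by
      intro k
      induction k with
      | zero => intro j; simp
      | succ k ih =>
        intro j
        rw [Function.iterate_succ_apply, key j, ih (j + 1)]
        have e : j + 1 + k = j + (k + 1) := by omega
        rw [e]
    have h0 : (fun i : Fin m =>
        if i = p then derTensor Ca 0 (curvTensor Ca B) (fun _ => v) ![w, v, v] else v) =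
        fun i => if i = p then q 0 else v := rfl
    rw [h0, covIter_const Ct Ca Ct0 Ct0' Ca0 Ca0' v hv, iter k 0, Nat.zero_add]
end
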